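/- arXiv:1405.0721 — 3 statements merged into one kernel-verified Lean document; each statement's English description precedes it below -/
import Mathlib

section
/- Let S be a commutative ring, let r, s be natural numbers, and let (d₁, d₂, d₃, d₄) be a 4-tuple of natural numbers. Consider the polynomial ring MvPolynomial ι S in variables indexed by ι = (Fin r ⊕ Fin s) × (Fin s ⊕ Fin r), with the four blocks of variables as follows: the r×s block (rows inl, columns inl), the r×r block (rows inl, columns inr), the s×s block (rows inr, columns inl), and the s×r block (rows inr, columns inr). Let 𝔖_{d₁}(r×r), 𝔖_{d₂}(s×s), 𝔖_{d₃}(r×s), 𝔖_{d₄}(s×r) denote, respectively, the S-modules of homogeneous polynomials of degrees d₁, d₂, d₃, d₄ in MvPolynomial (Fin r × Fin r) S, MvPolynomial (Fin s × Fin s) S, MvPolynomial (Fin r × Fin s) S, MvPolynomial (Fin s × Fin r) S. Then the S-linear map from the tensor product 𝔖_{d₁}(r×r) ⊗ 𝔖_{d₂}(s×s) ⊗ 𝔖_{d₃}(r×s) ⊗ 𝔖_{d₄}(s×r) to MvPolynomial ι S, induced by p₁ ⊗ p₂ ⊗ p₃ ⊗ p₄ ↦ p₁·p₂·p₃·p₄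 (where each pᵢ is viewed in MvPolynomial ι S by renaming its variables into the corresponding block of variables), is injective, and its image is exactly the submodule of polynomials that are simultaneously weighted homogeneous of degree d₁ in the r×r block variables, d₂ in the s×s block variables, d₃ in the r×s block variables, and d₄ in the s×r block variables. -/
open MvPolynomial TensorProduct

set_option synthInstance.maxHeartbeats 1000000
set_option maxHeartbeats 1600000

noncomputable section

/-- Renaming into the `r×r` block (rows `inl`, columns `inr`). -/
def embRR (r s : ℕ) : Fin r × Fin r → (Fin r ⊕ Fin s) × (Fin s ⊕ Fin r) :=
  fun p => (Sum.inl p.1, Sum.inr p.2)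

/-- Renaming into the `s×s` block (rows `inr`, columns `inl`). -/
def embSS (r s : ℕ) : Fin s × Fin s → (Fin r ⊕ Fin s) × (Fin s ⊕ Fin r) :=
  fun p => (Sum.inr p.1, Sum.inl p.2)

/-- Renaming into the `r×s` block (rows `inl`, columns `inl`). -/
def embRS (r s : ℕ) : Fin r × Fin s → (Fin r ⊕ Fin s) × (Fin s ⊕ Fin r) :=
  fun p => (Sum.inl p.1, Sum.inl p.2)

/-- Renaming into the `s×r` block (rows `inr`, columns `inr`). -/
def embSR (r s : ℕ) : Fin s × Fin r → (Fin r ⊕ Fin s) × (Fin s ⊕ Fin r) :=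
  fun p => (Sum.inr p.1, Sum.inr p.2)

/-- Indicator weight of the `r×s` block. -/
def wtRS (r s : ℕ) : (Fin r ⊕ Fin s) × (Fin s ⊕ Fin r) → ℕ
  | (Sum.inl _, Sum.inl _) => 1
  | _ => 0

/-- Indicator weight of the `r×r` block. -/
def wtRR (r s : ℕ) : (Fin r ⊕ Fin s) × (Fin s ⊕ Fin r) → ℕ
  | (Sum.inl _, Sum.inr _) => 1
  | _ => 0

/-- Indicator weight of the `s×s` block. -/
def wtSS (r s : ℕ) : (Fin r ⊕ Fin s) × (Fin s ⊕ Fin r) → ℕ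
  | (Sum.inr _, Sum.inl _) => 1
  | _ => 0

/-- Indicator weight of the `s×r` block. -/
def wtSR (r s : ℕ) : (Fin r ⊕ Fin s) × (Fin s ⊕ Fin r) → ℕ
  | (Sum.inr _, Sum.inr _) => 1
  | _ => 0

variable (S : Type*) [CommRing S] (r s d₁ d₂ d₃ d₄ : ℕ)

/-- Polynomials multihomogeneous of degrees `d₁, d₂, d₃, d₄` in the `r×r`, `s×s`, `r×s`
and `s×r` blocks of variables, respectively. -/
def blockSubmodule : Submodule S (MvPolynomial ((Fin r ⊕ Fin s) × (Fin s ⊕ Fin r)) S) :=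
  weightedHomogeneousSubmodule S (wtRR r s) d₁ ⊓
    weightedHomogeneousSubmodule S (wtSS r s) d₂ ⊓
      weightedHomogeneousSubmodule S (wtRS r s) d₃ ⊓
        weightedHomogeneousSubmodule S (wtSR r s) d₄

/-- Inclusion of `𝔖_{d₁}(r×r)` into the big polynomial ring, as a linear map. -/
def inclRR : (homogeneousSubmodule (Fin r × Fin r) S d₁) →ₗ[S]
    MvPolynomial ((Fin r ⊕ Fin s) × (Fin s ⊕ Fin r)) S :=
  (rename (embRR r s)).toLinearMap ∘ₗ (homogeneousSubmodule (Fin r × Fin r) S d₁).subtype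

/-- Inclusion of `𝔖_{d₂}(s×s)` into the big polynomial ring, as a linear map. -/
def inclSS : (homogeneousSubmodule (Fin s × Fin s) S d₂) →ₗ[S]
    MvPolynomial ((Fin r ⊕ Fin s) × (Fin s ⊕ Fin r)) S :=
  (rename (embSS r s)).toLinearMap ∘ₗ (homogeneousSubmodule (Fin s × Fin s) S d₂).subtype

/-- Inclusion of `𝔖_{d₃}(r×s)` into the big polynomial ring, as a linear map. -/
def inclRS : (homogeneousSubmodule (Fin r × Fin s) S d₃) →ₗ[S]
    MvPolynomial ((Fin r ⊕ Fin s) × (Fin s ⊕ Fin r)) S :=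
  (rename (embRS r s)).toLinearMap ∘ₗ (homogeneousSubmodule (Fin r × Fin s) S d₃).subtype

/-- Inclusion of `𝔖_{d₄}(s×r)` into the big polynomial ring, as a linear map. -/
def inclSR : (homogeneousSubmodule (Fin s × Fin r) S d₄) →ₗ[S]
    MvPolynomial ((Fin r ⊕ Fin s) × (Fin s ⊕ Fin r)) S :=
  (rename (embSR r s)).toLinearMap ∘ₗ (homogeneousSubmodule (Fin s × Fin r) S d₄).subtype

/-- The multiplication map on `𝔖_{d₁}(r×r) ⊗ 𝔖_{d₂}(s×s)`. -/
def mulMap₁₂ : (homogeneousSubmodule (Fin r × Fin r) S d₁ ⊗[S]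
      homogeneousSubmodule (Fin s × Fin s) S d₂) →ₗ[S]
    MvPolynomial ((Fin r ⊕ Fin s) × (Fin s ⊕ Fin r)) S :=
  TensorProduct.lift
    (((LinearMap.mul S (MvPolynomial ((Fin r ⊕ Fin s) × (Fin s ⊕ Fin r)) S)).compl₂
        (inclSS S r s d₂)).comp (inclRR S r s d₁))

/-- The multiplication map on `(𝔖_{d₁}(r×r) ⊗ 𝔖_{d₂}(s×s)) ⊗ 𝔖_{d₃}(r×s)`. -/
def mulMap₁₂₃ : ((homogeneousSubmodule (Fin r × Fin r) S d₁ ⊗[S]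
      homogeneousSubmodule (Fin s × Fin s) S d₂) ⊗[S]
      homogeneousSubmodule (Fin r × Fin s) S d₃) →ₗ[S]
    MvPolynomial ((Fin r ⊕ Fin s) × (Fin s ⊕ Fin r)) S :=
  TensorProduct.lift
    (((LinearMap.mul S (MvPolynomial ((Fin r ⊕ Fin s) × (Fin s ⊕ Fin r)) S)).compl₂
        (inclRS S r s d₃)).comp (mulMap₁₂ S r s d₁ d₂))

/-- The multiplication map `𝔖_{d₁}(r×r) ⊗ 𝔖_{d₂}(s×s) ⊗ 𝔖_{d₃}(r×s) ⊗ 𝔖_{d₄}(s×r) →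
MvPolynomial ((Fin r ⊕ Fin s) × (Fin s ⊕ Fin r)) S`, induced by
`p₁ ⊗ p₂ ⊗ p₃ ⊗ p₄ ↦ p₁·p₂·p₃·p₄` after renaming into the four blocks. -/
def mulMapFull : (((homogeneousSubmodule (Fin r × Fin r) S d₁ ⊗[S]
      homogeneousSubmodule (Fin s × Fin s) S d₂) ⊗[S]
      homogeneousSubmodule (Fin r × Fin s) S d₃) ⊗[S]
      homogeneousSubmodule (Fin s × Fin r) S d₄) →ₗ[S]
    MvPolynomial ((Fin r ⊕ Fin s) × (Fin s ⊕ Fin r)) S :=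
  TensorProduct.lift
    (((LinearMap.mul S (MvPolynomial ((Fin r ⊕ Fin s) × (Fin s ⊕ Fin r)) S)).compl₂
        (inclSR S r s d₄)).comp (mulMap₁₂₃ S r s d₁ d₂ d₃))

/-! ### Auxiliary lemmas -/

section AuxGeneral

theorem aux_weight_mapDomain {σ τ : Type*} (f : σ → τ) (w : τ → ℕ) (m : σ →₀ ℕ) :
    (Finsupp.weight w) (Finsupp.mapDomain f m) = (Finsupp.weight (w ∘ f)) m := by
  classical
  simp only [Finsupp.weight_apply]
  rw [Finsupp.sum_mapDomain_index (by simp) (by intro b m₁ m₂; rw [add_smul])]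
  rfl

theorem aux_isWeightedHomogeneous_rename {σ τ : Type*} (f : σ → τ) {w : τ → ℕ}
    {p : MvPolynomial σ S} {n : ℕ} (hp : p.IsWeightedHomogeneous (w ∘ f) n) :
    (rename f p).IsWeightedHomogeneous w n := by
  intro d hd
  obtain ⟨u, rfl, hu⟩ := coeff_rename_ne_zero f p d hd
  rw [aux_weight_mapDomain]
  exact hp hu

theorem aux_isWeightedHomogeneous_of_isHomogeneous {σ : Type*} {w : σ → ℕ} (hw : ∀ i, w i = 1)
    {p : MvPolynomial σ S} {n : ℕ} (hp : p.IsHomogeneous n) : p.IsWeightedHomogeneous w n := by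
  intro d hd
  have h1 := hp hd
  rw [← h1]
  simp only [Finsupp.weight_apply, hw, Pi.one_apply, smul_eq_mul]

theorem aux_isWeightedHomogeneous_zero_wt {σ : Type*} {w : σ → ℕ} (hw : ∀ i, w i = 0)
    (p : MvPolynomial σ S) : p.IsWeightedHomogeneous w 0 := by
  intro d _
  simp [Finsupp.weight_apply, hw]

theorem aux_injective_of_comp_basis {R M N ι' : Type*} [CommSemiring R] [AddCommMonoid M]
    [AddCommMonoid N] [Module R M] [Module R N] (b : Module.Basis ι' R M) {f : M →ₗ[R] N}
    (h : LinearIndependent R (⇑f ∘ ⇑b)) : Function.Injective f := by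
  intro x y hxy
  have hx : f (Finsupp.linearCombination R (⇑b) (b.repr x)) =
      f (Finsupp.linearCombination R (⇑b) (b.repr y)) := by
    rw [b.linearCombination_repr, b.linearCombination_repr]; exact hxy
  rw [Finsupp.apply_linearCombination, Finsupp.apply_linearCombination] at hx
  have h2 : b.repr x = b.repr y := h hx
  calc x = b.repr.symm (b.repr x) := by simp
  _ = b.repr.symm (b.repr y) := by rw [h2]
  _ = y := by simp

end AuxGeneral

section AuxBlocks

theorem embRR_inj : Function.Injective (embRR r s) := by
  rintro ⟨a1, a2⟩ ⟨b1, b2⟩ h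
  simp only [embRR, Prod.mk.injEq, Sum.inl.injEq, Sum.inr.injEq] at h
  simp [Prod.ext_iff, h.1, h.2]

theorem embSS_inj : Function.Injective (embSS r s) := by
  rintro ⟨a1, a2⟩ ⟨b1, b2⟩ h
  simp only [embSS, Prod.mk.injEq, Sum.inl.injEq, Sum.inr.injEq] at h
  simp [Prod.ext_iff, h.1, h.2]

theorem embRS_inj : Function.Injective (embRS r s) := by
  rintro ⟨a1, a2⟩ ⟨b1, b2⟩ h
  simp only [embRS, Prod.mk.injEq, Sum.inl.injEq, Sum.inr.injEq] at h
  simp [Prod.ext_iff, h.1, h.2]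

theorem embSR_inj : Function.Injective (embSR r s) := by
  rintro ⟨a1, a2⟩ ⟨b1, b2⟩ h
  simp only [embSR, Prod.mk.injEq, Sum.inl.injEq, Sum.inr.injEq] at h
  simp [Prod.ext_iff, h.1, h.2]

/-- Restriction of an exponent vector to the `r×r` block. -/
def resRR (m : (Fin r ⊕ Fin s) × (Fin s ⊕ Fin r) →₀ ℕ) : Fin r × Fin r →₀ ℕ :=
  Finsupp.comapDomain (embRR r s) m (embRR_inj r s).injOn

/-- Restriction of an exponent vector to the `s×s` block. -/
def resSS (m : (Fin r ⊕ Fin s) × (Fin s ⊕ Fin r) →₀ ℕ) : Fin s × Fin s →₀ ℕ :=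
  Finsupp.comapDomain (embSS r s) m (embSS_inj r s).injOn

/-- Restriction of an exponent vector to the `r×s` block. -/
def resRS (m : (Fin r ⊕ Fin s) × (Fin s ⊕ Fin r) →₀ ℕ) : Fin r × Fin s →₀ ℕ :=
  Finsupp.comapDomain (embRS r s) m (embRS_inj r s).injOn

/-- Restriction of an exponent vector to the `s×r` block. -/
def resSR (m : (Fin r ⊕ Fin s) × (Fin s ⊕ Fin r) →₀ ℕ) : Fin s × Fin r →₀ ℕ :=
  Finsupp.comapDomain (embSR r s) m (embSR_inj r s).injOn

-- Evaluation of `mapDomain` along a block embedding at points of the various blocks.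

@[simp] theorem mapDomain_embRR_atRR (m : Fin r × Fin r →₀ ℕ) (a b : Fin r) :
    Finsupp.mapDomain (embRR r s) m (Sum.inl a, Sum.inr b) = m (a, b) :=
  Finsupp.mapDomain_apply (embRR_inj r s) m (a, b)

@[simp] theorem mapDomain_embRR_atSS (m : Fin r × Fin r →₀ ℕ) (a b : Fin s) :
    Finsupp.mapDomain (embRR r s) m (Sum.inr a, Sum.inl b) = 0 :=
  Finsupp.mapDomain_notin_range m _ (by rintro ⟨⟨y1, y2⟩, h⟩; simp [embRR] at h)

@[simp] theorem mapDomain_embRR_atRS (m : Fin r × Fin r →₀ ℕ) (a : Fin r) (b : Fin s) :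
    Finsupp.mapDomain (embRR r s) m (Sum.inl a, Sum.inl b) = 0 :=
  Finsupp.mapDomain_notin_range m _ (by rintro ⟨⟨y1, y2⟩, h⟩; simp [embRR] at h)

@[simp] theorem mapDomain_embRR_atSR (m : Fin r × Fin r →₀ ℕ) (a : Fin s) (b : Fin r) :
    Finsupp.mapDomain (embRR r s) m (Sum.inr a, Sum.inr b) = 0 :=
  Finsupp.mapDomain_notin_range m _ (by rintro ⟨⟨y1, y2⟩, h⟩; simp [embRR] at h)

@[simp] theorem mapDomain_embSS_atRR (m : Fin s × Fin s →₀ ℕ) (a b : Fin r) :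
    Finsupp.mapDomain (embSS r s) m (Sum.inl a, Sum.inr b) = 0 :=
  Finsupp.mapDomain_notin_range m _ (by rintro ⟨⟨y1, y2⟩, h⟩; simp [embSS] at h)

@[simp] theorem mapDomain_embSS_atSS (m : Fin s × Fin s →₀ ℕ) (a b : Fin s) :
    Finsupp.mapDomain (embSS r s) m (Sum.inr a, Sum.inl b) = m (a, b) :=
  Finsupp.mapDomain_apply (embSS_inj r s) m (a, b)

@[simp] theorem mapDomain_embSS_atRS (m : Fin s × Fin s →₀ ℕ) (a : Fin r) (b : Fin s) :
    Finsupp.mapDomain (embSS r s) m (Sum.inl a, Sum.inl b) = 0 :=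
  Finsupp.mapDomain_notin_range m _ (by rintro ⟨⟨y1, y2⟩, h⟩; simp [embSS] at h)

@[simp] theorem mapDomain_embSS_atSR (m : Fin s × Fin s →₀ ℕ) (a : Fin s) (b : Fin r) :
    Finsupp.mapDomain (embSS r s) m (Sum.inr a, Sum.inr b) = 0 :=
  Finsupp.mapDomain_notin_range m _ (by rintro ⟨⟨y1, y2⟩, h⟩; simp [embSS] at h)

@[simp] theorem mapDomain_embRS_atRR (m : Fin r × Fin s →₀ ℕ) (a b : Fin r) :
    Finsupp.mapDomain (embRS r s) m (Sum.inl a, Sum.inr b) = 0 :=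
  Finsupp.mapDomain_notin_range m _ (by rintro ⟨⟨y1, y2⟩, h⟩; simp [embRS] at h)

@[simp] theorem mapDomain_embRS_atSS (m : Fin r × Fin s →₀ ℕ) (a b : Fin s) :
    Finsupp.mapDomain (embRS r s) m (Sum.inr a, Sum.inl b) = 0 :=
  Finsupp.mapDomain_notin_range m _ (by rintro ⟨⟨y1, y2⟩, h⟩; simp [embRS] at h)

@[simp] theorem mapDomain_embRS_atRS (m : Fin r × Fin s →₀ ℕ) (a : Fin r) (b : Fin s) :
    Finsupp.mapDomain (embRS r s) m (Sum.inl a, Sum.inl b) = m (a, b) :=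
  Finsupp.mapDomain_apply (embRS_inj r s) m (a, b)

@[simp] theorem mapDomain_embRS_atSR (m : Fin r × Fin s →₀ ℕ) (a : Fin s) (b : Fin r) :
    Finsupp.mapDomain (embRS r s) m (Sum.inr a, Sum.inr b) = 0 :=
  Finsupp.mapDomain_notin_range m _ (by rintro ⟨⟨y1, y2⟩, h⟩; simp [embRS] at h)

@[simp] theorem mapDomain_embSR_atRR (m : Fin s × Fin r →₀ ℕ) (a b : Fin r) :
    Finsupp.mapDomain (embSR r s) m (Sum.inl a, Sum.inr b) = 0 :=
  Finsupp.mapDomain_notin_range m _ (by rintro ⟨⟨y1, y2⟩, h⟩; simp [embSR] at h)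

@[simp] theorem mapDomain_embSR_atSS (m : Fin s × Fin r →₀ ℕ) (a b : Fin s) :
    Finsupp.mapDomain (embSR r s) m (Sum.inr a, Sum.inl b) = 0 :=
  Finsupp.mapDomain_notin_range m _ (by rintro ⟨⟨y1, y2⟩, h⟩; simp [embSR] at h)

@[simp] theorem mapDomain_embSR_atRS (m : Fin s × Fin r →₀ ℕ) (a : Fin r) (b : Fin s) :
    Finsupp.mapDomain (embSR r s) m (Sum.inl a, Sum.inl b) = 0 :=
  Finsupp.mapDomain_notin_range m _ (by rintro ⟨⟨y1, y2⟩, h⟩; simp [embSR] at h)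

@[simp] theorem mapDomain_embSR_atSR (m : Fin s × Fin r →₀ ℕ) (a : Fin s) (b : Fin r) :
    Finsupp.mapDomain (embSR r s) m (Sum.inr a, Sum.inr b) = m (a, b) :=
  Finsupp.mapDomain_apply (embSR_inj r s) m (a, b)

/-- Every exponent vector decomposes as a sum of its four block restrictions. -/
theorem res_decomp (m : (Fin r ⊕ Fin s) × (Fin s ⊕ Fin r) →₀ ℕ) :
    Finsupp.mapDomain (embRR r s) (resRR r s m) + Finsupp.mapDomain (embSS r s) (resSS r s m) +
      Finsupp.mapDomain (embRS r s) (resRS r s m) +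
        Finsupp.mapDomain (embSR r s) (resSR r s m) = m := by
  ext i
  obtain ⟨i1 | i1, i2 | i2⟩ := i <;>
    simp [resRR, resSS, resRS, resSR, Finsupp.comapDomain_apply, embRR, embSS, embRS, embSR]

/-- The index type for the monomial basis of the fourfold tensor product. -/
def blockIndex (r s : ℕ) : Type :=
  (((Fin r × Fin r →₀ ℕ) × (Fin s × Fin s →₀ ℕ)) × (Fin r × Fin s →₀ ℕ)) × (Fin s × Fin r →₀ ℕ)

/-- Combination of four block exponent vectors into a global exponent vector. -/
def muMap (x : blockIndex r s) : (Fin r ⊕ Fin s) × (Fin s ⊕ Fin r) →₀ ℕ :=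
  Finsupp.mapDomain (embRR r s) x.1.1.1 + Finsupp.mapDomain (embSS r s) x.1.1.2 +
    Finsupp.mapDomain (embRS r s) x.1.2 + Finsupp.mapDomain (embSR r s) x.2

theorem muMap_injective : Function.Injective (muMap r s) := by
  intro x y h
  obtain ⟨⟨⟨x1, x2⟩, x3⟩, x4⟩ := x
  obtain ⟨⟨⟨y1, y2⟩, y3⟩, y4⟩ := y
  have hRR : x1 = y1 := by
    ext ⟨a1, a2⟩
    have h2 := congrArg (fun m => m (Sum.inl a1, Sum.inr a2)) h
    simpa [muMap] using h2
  have hSS : x2 = y2 := by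
    ext ⟨a1, a2⟩
    have h2 := congrArg (fun m => m (Sum.inr a1, Sum.inl a2)) h
    simpa [muMap] using h2
  have hRS : x3 = y3 := by
    ext ⟨a1, a2⟩
    have h2 := congrArg (fun m => m (Sum.inl a1, Sum.inl a2)) h
    simpa [muMap] using h2
  have hSR : x4 = y4 := by
    ext ⟨a1, a2⟩
    have h2 := congrArg (fun m => m (Sum.inr a1, Sum.inr a2)) h
    simpa [muMap] using h2
  subst hRR hSS hRS hSR; rfl

theorem weight_resRR (m : (Fin r ⊕ Fin s) × (Fin s ⊕ Fin r) →₀ ℕ) :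
    (Finsupp.weight (1 : Fin r × Fin r → ℕ)) (resRR r s m) =
      (Finsupp.weight (wtRR r s)) m := by
  conv_rhs => rw [← res_decomp r s m]
  rw [map_add, map_add, map_add, aux_weight_mapDomain, aux_weight_mapDomain,
    aux_weight_mapDomain, aux_weight_mapDomain]
  simp [Finsupp.weight_apply, Function.comp_def, wtRR, embRR, embSS, embRS, embSR]

theorem weight_resSS (m : (Fin r ⊕ Fin s) × (Fin s ⊕ Fin r) →₀ ℕ) :
    (Finsupp.weight (1 : Fin s × Fin s → ℕ)) (resSS r s m) =
      (Finsupp.weight (wtSS r s)) m := by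
  conv_rhs => rw [← res_decomp r s m]
  rw [map_add, map_add, map_add, aux_weight_mapDomain, aux_weight_mapDomain,
    aux_weight_mapDomain, aux_weight_mapDomain]
  simp [Finsupp.weight_apply, Function.comp_def, wtSS, embRR, embSS, embRS, embSR]

theorem weight_resRS (m : (Fin r ⊕ Fin s) × (Fin s ⊕ Fin r) →₀ ℕ) :
    (Finsupp.weight (1 : Fin r × Fin s → ℕ)) (resRS r s m) =
      (Finsupp.weight (wtRS r s)) m := by
  conv_rhs => rw [← res_decomp r s m]
  rw [map_add, map_add, map_add, aux_weight_mapDomain, aux_weight_mapDomain,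
    aux_weight_mapDomain, aux_weight_mapDomain]
  simp [Finsupp.weight_apply, Function.comp_def, wtRS, embRR, embSS, embRS, embSR]

theorem weight_resSR (m : (Fin r ⊕ Fin s) × (Fin s ⊕ Fin r) →₀ ℕ) :
    (Finsupp.weight (1 : Fin s × Fin r → ℕ)) (resSR r s m) =
      (Finsupp.weight (wtSR r s)) m := by
  conv_rhs => rw [← res_decomp r s m]
  rw [map_add, map_add, map_add, aux_weight_mapDomain, aux_weight_mapDomain,
    aux_weight_mapDomain, aux_weight_mapDomain]
  simp [Finsupp.weight_apply, Function.comp_def, wtSR, embRR, embSS, embRS, embSR]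

end AuxBlocks

section AuxFullMul

/-- The multiplication map on the full polynomial rings (first two factors). -/
def fullMul₁₂ : (MvPolynomial (Fin r × Fin r) S ⊗[S] MvPolynomial (Fin s × Fin s) S) →ₗ[S]
    MvPolynomial ((Fin r ⊕ Fin s) × (Fin s ⊕ Fin r)) S :=
  TensorProduct.lift
    (((LinearMap.mul S (MvPolynomial ((Fin r ⊕ Fin s) × (Fin s ⊕ Fin r)) S)).compl₂
        (rename (embSS r s)).toLinearMap).comp (rename (embRR r s)).toLinearMap)

/-- The multiplication map on the full polynomial rings (first three factors). -/
def fullMul₁₂₃ : ((MvPolynomial (Fin r × Fin r) S ⊗[S] MvPolynomial (Fin s × Fin s) S) ⊗[S]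
      MvPolynomial (Fin r × Fin s) S) →ₗ[S]
    MvPolynomial ((Fin r ⊕ Fin s) × (Fin s ⊕ Fin r)) S :=
  TensorProduct.lift
    (((LinearMap.mul S (MvPolynomial ((Fin r ⊕ Fin s) × (Fin s ⊕ Fin r)) S)).compl₂
        (rename (embRS r s)).toLinearMap).comp (fullMul₁₂ S r s))

/-- The multiplication map on the full polynomial rings. -/
def fullMul : (((MvPolynomial (Fin r × Fin r) S ⊗[S] MvPolynomial (Fin s × Fin s) S) ⊗[S]
      MvPolynomial (Fin r × Fin s) S) ⊗[S] MvPolynomial (Fin s × Fin r) S) →ₗ[S]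
    MvPolynomial ((Fin r ⊕ Fin s) × (Fin s ⊕ Fin r)) S :=
  TensorProduct.lift
    (((LinearMap.mul S (MvPolynomial ((Fin r ⊕ Fin s) × (Fin s ⊕ Fin r)) S)).compl₂
        (rename (embSR r s)).toLinearMap).comp (fullMul₁₂₃ S r s))

theorem fullMul_tmul (p₁ : MvPolynomial (Fin r × Fin r) S) (p₂ : MvPolynomial (Fin s × Fin s) S)
    (p₃ : MvPolynomial (Fin r × Fin s) S) (p₄ : MvPolynomial (Fin s × Fin r) S) :
    fullMul S r s (((p₁ ⊗ₜ[S] p₂) ⊗ₜ[S] p₃) ⊗ₜ[S] p₄) =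
      rename (embRR r s) p₁ * rename (embSS r s) p₂ * rename (embRS r s) p₃ *
        rename (embSR r s) p₄ := by
  simp [fullMul, fullMul₁₂₃, fullMul₁₂]

/-- The tensor product of the four submodule inclusions. -/
def subJ : (((homogeneousSubmodule (Fin r × Fin r) S d₁ ⊗[S]
      homogeneousSubmodule (Fin s × Fin s) S d₂) ⊗[S]
      homogeneousSubmodule (Fin r × Fin s) S d₃) ⊗[S]
      homogeneousSubmodule (Fin s × Fin r) S d₄) →ₗ[S]
    (((MvPolynomial (Fin r × Fin r) S ⊗[S] MvPolynomial (Fin s × Fin s) S) ⊗[S]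
      MvPolynomial (Fin r × Fin s) S) ⊗[S] MvPolynomial (Fin s × Fin r) S) :=
  TensorProduct.map
    (TensorProduct.map
      (TensorProduct.map (homogeneousSubmodule (Fin r × Fin r) S d₁).subtype
        (homogeneousSubmodule (Fin s × Fin s) S d₂).subtype)
      (homogeneousSubmodule (Fin r × Fin s) S d₃).subtype)
    (homogeneousSubmodule (Fin s × Fin r) S d₄).subtype

theorem mulMapFull_eq_comp :
    mulMapFull S r s d₁ d₂ d₃ d₄ = (fullMul S r s).comp (subJ S r s d₁ d₂ d₃ d₄) := by
  refine TensorProduct.ext' fun x p₄ => ?_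
  induction x using TensorProduct.induction_on with
  | zero => simp
  | add a b ha hb => simp only [TensorProduct.add_tmul, map_add, ha, hb]
  | tmul y p₃ =>
    induction y using TensorProduct.induction_on with
    | zero => simp [TensorProduct.zero_tmul]
    | add a b ha hb => simp only [TensorProduct.add_tmul, map_add, ha, hb]
    | tmul p₁ p₂ =>
      simp [mulMapFull, mulMap₁₂₃, mulMap₁₂, inclRR, inclSS, inclRS, inclSR, fullMul,
        fullMul₁₂₃, fullMul₁₂, subJ]

theorem fullMul_injective : Function.Injective (fullMul S r s) := by
  classical
  set b := (((basisMonomials (Fin r × Fin r) S).tensorProduct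
      (basisMonomials (Fin s × Fin s) S)).tensorProduct
        (basisMonomials (Fin r × Fin s) S)).tensorProduct
          (basisMonomials (Fin s × Fin r) S) with hb
  have heq : (⇑(fullMul S r s) ∘ ⇑b) =
      (fun m => (monomial m (1 : S))) ∘ (muMap r s) := by
    funext x
    obtain ⟨⟨⟨a, a'⟩, c⟩, d⟩ := x
    simp only [hb, Function.comp_apply, Module.Basis.tensorProduct_apply, coe_basisMonomials]
    rw [fullMul_tmul]
    simp only [rename_monomial, monomial_mul, mul_one]
    rfl
  have hli : LinearIndependent S (fun m : (Fin r ⊕ Fin s) × (Fin s ⊕ Fin r) →₀ ℕ =>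
      (monomial m (1 : S))) := by
    have h := (basisMonomials ((Fin r ⊕ Fin s) × (Fin s ⊕ Fin r)) S).linearIndependent
    rwa [coe_basisMonomials] at h
  refine aux_injective_of_comp_basis (R := S)
    (M := (((MvPolynomial (Fin r × Fin r) S ⊗[S] MvPolynomial (Fin s × Fin s) S) ⊗[S]
      MvPolynomial (Fin r × Fin s) S) ⊗[S] MvPolynomial (Fin s × Fin r) S))
    (N := MvPolynomial ((Fin r ⊕ Fin s) × (Fin s ⊕ Fin r)) S) b (f := fullMul S r s) ?_
  rw [heq]
  exact hli.comp _ (muMap_injective r s)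

/-- Projection onto the degree-`d₁` homogeneous component, as a map into the submodule. -/
def projRR : MvPolynomial (Fin r × Fin r) S →ₗ[S] homogeneousSubmodule (Fin r × Fin r) S d₁ :=
  LinearMap.codRestrict _ (homogeneousComponent d₁) fun p =>
    homogeneousComponent_isHomogeneous d₁ p

def projSS : MvPolynomial (Fin s × Fin s) S →ₗ[S] homogeneousSubmodule (Fin s × Fin s) S d₂ :=
  LinearMap.codRestrict _ (homogeneousComponent d₂) fun p =>
    homogeneousComponent_isHomogeneous d₂ p

def projRS : MvPolynomial (Fin r × Fin s) S →ₗ[S] homogeneousSubmodule (Fin r × Fin s) S d₃ :=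
  LinearMap.codRestrict _ (homogeneousComponent d₃) fun p =>
    homogeneousComponent_isHomogeneous d₃ p

def projSR : MvPolynomial (Fin s × Fin r) S →ₗ[S] homogeneousSubmodule (Fin s × Fin r) S d₄ :=
  LinearMap.codRestrict _ (homogeneousComponent d₄) fun p =>
    homogeneousComponent_isHomogeneous d₄ p

theorem projRR_comp :
    (projRR S r d₁).comp (homogeneousSubmodule (Fin r × Fin r) S d₁).subtype =
      LinearMap.id := by
  apply LinearMap.ext; rintro ⟨p, hp⟩; apply Subtype.ext
  show homogeneousComponent d₁ p = p; rw [homogeneousComponent_of_mem hp, if_pos rfl]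

theorem projSS_comp :
    (projSS S s d₂).comp (homogeneousSubmodule (Fin s × Fin s) S d₂).subtype =
      LinearMap.id := by
  apply LinearMap.ext; rintro ⟨p, hp⟩; apply Subtype.ext
  show homogeneousComponent d₂ p = p; rw [homogeneousComponent_of_mem hp, if_pos rfl]

theorem projRS_comp :
    (projRS S r s d₃).comp (homogeneousSubmodule (Fin r × Fin s) S d₃).subtype =
      LinearMap.id := by
  apply LinearMap.ext; rintro ⟨p, hp⟩; apply Subtype.ext
  show homogeneousComponent d₃ p = p; rw [homogeneousComponent_of_mem hp, if_pos rfl]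

theorem projSR_comp :
    (projSR S r s d₄).comp (homogeneousSubmodule (Fin s × Fin r) S d₄).subtype =
      LinearMap.id := by
  apply LinearMap.ext; rintro ⟨p, hp⟩; apply Subtype.ext
  show homogeneousComponent d₄ p = p; rw [homogeneousComponent_of_mem hp, if_pos rfl]

theorem subJ_injective : Function.Injective (subJ S r s d₁ d₂ d₃ d₄) := by
  have key : (TensorProduct.map (TensorProduct.map
        (TensorProduct.map (projRR S r d₁) (projSS S s d₂)) (projRS S r s d₃))
          (projSR S r s d₄)).comp (subJ S r s d₁ d₂ d₃ d₄) = LinearMap.id := by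
    rw [subJ, ← TensorProduct.map_comp, ← TensorProduct.map_comp, ← TensorProduct.map_comp,
      projRR_comp, projSS_comp, projRS_comp, projSR_comp, TensorProduct.map_id,
      TensorProduct.map_id, TensorProduct.map_id]
  intro x y h
  have h2 : ∀ z, (TensorProduct.map (TensorProduct.map
      (TensorProduct.map (projRR S r d₁) (projSS S s d₂)) (projRS S r s d₃))
        (projSR S r s d₄)) (subJ S r s d₁ d₂ d₃ d₄ z) = z := fun z => by
    rw [← LinearMap.comp_apply, key, LinearMap.id_apply]
  rw [← h2 x, ← h2 y, h]

end AuxFullMul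

/-- The tensor-product multiplication map is induced by `p₁ ⊗ p₂ ⊗ p₃ ⊗ p₄ ↦ p₁·p₂·p₃·p₄`,
is injective, and its image is exactly the submodule of polynomials simultaneously weighted
homogeneous of degree `d₁` in the `r×r` block, `d₂` in the `s×s` block, `d₃` in the `r×s`
block, and `d₄` in the `s×r` block. -/
theorem mulMapFull_injective_and_range :
    (∀ (p₁ : homogeneousSubmodule (Fin r × Fin r) S d₁)
      (p₂ : homogeneousSubmodule (Fin s × Fin s) S d₂)
      (p₃ : homogeneousSubmodule (Fin r × Fin s) S d₃)
      (p₄ : homogeneousSubmodule (Fin s × Fin r) S d₄),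
      mulMapFull S r s d₁ d₂ d₃ d₄ (((p₁ ⊗ₜ[S] p₂) ⊗ₜ[S] p₃) ⊗ₜ[S] p₄) =
        rename (embRR r s) (p₁ : MvPolynomial (Fin r × Fin r) S) *
          rename (embSS r s) (p₂ : MvPolynomial (Fin s × Fin s) S) *
            rename (embRS r s) (p₃ : MvPolynomial (Fin r × Fin s) S) *
              rename (embSR r s) (p₄ : MvPolynomial (Fin s × Fin r) S)) ∧
    Function.Injective (mulMapFull S r s d₁ d₂ d₃ d₄) ∧
    LinearMap.range (mulMapFull S r s d₁ d₂ d₃ d₄) = blockSubmodule S r s d₁ d₂ d₃ d₄ := by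
  have tmul_eq : ∀ (p₁ : homogeneousSubmodule (Fin r × Fin r) S d₁)
      (p₂ : homogeneousSubmodule (Fin s × Fin s) S d₂)
      (p₃ : homogeneousSubmodule (Fin r × Fin s) S d₃)
      (p₄ : homogeneousSubmodule (Fin s × Fin r) S d₄),
      mulMapFull S r s d₁ d₂ d₃ d₄ (((p₁ ⊗ₜ[S] p₂) ⊗ₜ[S] p₃) ⊗ₜ[S] p₄) =
        rename (embRR r s) (p₁ : MvPolynomial (Fin r × Fin r) S) *
          rename (embSS r s) (p₂ : MvPolynomial (Fin s × Fin s) S) *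
            rename (embRS r s) (p₃ : MvPolynomial (Fin r × Fin s) S) *
              rename (embSR r s) (p₄ : MvPolynomial (Fin s × Fin r) S) := by
    intro p₁ p₂ p₃ p₄
    simp [mulMapFull, mulMap₁₂₃, mulMap₁₂, inclRR, inclSS, inclRS, inclSR]
  refine ⟨tmul_eq, ?_, ?_⟩
  · rw [mulMapFull_eq_comp, LinearMap.coe_comp]
    exact (fullMul_injective S r s).comp (subJ_injective S r s d₁ d₂ d₃ d₄)
  · apply le_antisymm
    · rintro q ⟨x, rfl⟩
      induction x using TensorProduct.induction_on with
      | zero => rw [map_zero]; exact zero_mem _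
      | add a b ha hb => rw [map_add]; exact add_mem ha hb
      | tmul y p₄ =>
        induction y using TensorProduct.induction_on with
        | zero => rw [TensorProduct.zero_tmul, map_zero]; exact zero_mem _
        | add a b ha hb => rw [TensorProduct.add_tmul, map_add]; exact add_mem ha hb
        | tmul z p₃ =>
          induction z using TensorProduct.induction_on with
          | zero =>
            rw [TensorProduct.zero_tmul, TensorProduct.zero_tmul, map_zero]; exact zero_mem _
          | add a b ha hb =>
            rw [TensorProduct.add_tmul, TensorProduct.add_tmul, map_add]; exact add_mem ha hb
          | tmul p₁ p₂ =>
            rw [tmul_eq]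
            have h₁ : ((p₁ : MvPolynomial (Fin r × Fin r) S)).IsHomogeneous d₁ :=
              mem_homogeneousSubmodule _ _ |>.mp p₁.2
            have h₂ : ((p₂ : MvPolynomial (Fin s × Fin s) S)).IsHomogeneous d₂ :=
              mem_homogeneousSubmodule _ _ |>.mp p₂.2
            have h₃ : ((p₃ : MvPolynomial (Fin r × Fin s) S)).IsHomogeneous d₃ :=
              mem_homogeneousSubmodule _ _ |>.mp p₃.2
            have h₄ : ((p₄ : MvPolynomial (Fin s × Fin r) S)).IsHomogeneous d₄ :=
              mem_homogeneousSubmodule _ _ |>.mp p₄.2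
            simp only [blockSubmodule, Submodule.mem_inf, mem_weightedHomogeneousSubmodule]
            refine ⟨⟨⟨?_, ?_⟩, ?_⟩, ?_⟩
            · have A : IsWeightedHomogeneous (wtRR r s)
                  (rename (embRR r s) (p₁ : MvPolynomial (Fin r × Fin r) S)) d₁ :=
                aux_isWeightedHomogeneous_rename _ _
                  (aux_isWeightedHomogeneous_of_isHomogeneous _ (fun i => rfl) h₁)
              have B : IsWeightedHomogeneous (wtRR r s)
                  (rename (embSS r s) (p₂ : MvPolynomial (Fin s × Fin s) S)) 0 :=
                aux_isWeightedHomogeneous_rename _ _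
                  (aux_isWeightedHomogeneous_zero_wt _ (fun i => rfl) _)
              have C : IsWeightedHomogeneous (wtRR r s)
                  (rename (embRS r s) (p₃ : MvPolynomial (Fin r × Fin s) S)) 0 :=
                aux_isWeightedHomogeneous_rename _ _
                  (aux_isWeightedHomogeneous_zero_wt _ (fun i => rfl) _)
              have D : IsWeightedHomogeneous (wtRR r s)
                  (rename (embSR r s) (p₄ : MvPolynomial (Fin s × Fin r) S)) 0 :=
                aux_isWeightedHomogeneous_rename _ _
                  (aux_isWeightedHomogeneous_zero_wt _ (fun i => rfl) _)
              simpa using ((A.mul B).mul C).mul D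
            · have A : IsWeightedHomogeneous (wtSS r s)
                  (rename (embRR r s) (p₁ : MvPolynomial (Fin r × Fin r) S)) 0 :=
                aux_isWeightedHomogeneous_rename _ _
                  (aux_isWeightedHomogeneous_zero_wt _ (fun i => rfl) _)
              have B : IsWeightedHomogeneous (wtSS r s)
                  (rename (embSS r s) (p₂ : MvPolynomial (Fin s × Fin s) S)) d₂ :=
                aux_isWeightedHomogeneous_rename _ _
                  (aux_isWeightedHomogeneous_of_isHomogeneous _ (fun i => rfl) h₂)
              have C : IsWeightedHomogeneous (wtSS r s)
                  (rename (embRS r s) (p₃ : MvPolynomial (Fin r × Fin s) S)) 0 :=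
                aux_isWeightedHomogeneous_rename _ _
                  (aux_isWeightedHomogeneous_zero_wt _ (fun i => rfl) _)
              have D : IsWeightedHomogeneous (wtSS r s)
                  (rename (embSR r s) (p₄ : MvPolynomial (Fin s × Fin r) S)) 0 :=
                aux_isWeightedHomogeneous_rename _ _
                  (aux_isWeightedHomogeneous_zero_wt _ (fun i => rfl) _)
              simpa using ((A.mul B).mul C).mul D
            · have A : IsWeightedHomogeneous (wtRS r s)
                  (rename (embRR r s) (p₁ : MvPolynomial (Fin r × Fin r) S)) 0 :=
                aux_isWeightedHomogeneous_rename _ _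
                  (aux_isWeightedHomogeneous_zero_wt _ (fun i => rfl) _)
              have B : IsWeightedHomogeneous (wtRS r s)
                  (rename (embSS r s) (p₂ : MvPolynomial (Fin s × Fin s) S)) 0 :=
                aux_isWeightedHomogeneous_rename _ _
                  (aux_isWeightedHomogeneous_zero_wt _ (fun i => rfl) _)
              have C : IsWeightedHomogeneous (wtRS r s)
                  (rename (embRS r s) (p₃ : MvPolynomial (Fin r × Fin s) S)) d₃ :=
                aux_isWeightedHomogeneous_rename _ _
                  (aux_isWeightedHomogeneous_of_isHomogeneous _ (fun i => rfl) h₃)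
              have D : IsWeightedHomogeneous (wtRS r s)
                  (rename (embSR r s) (p₄ : MvPolynomial (Fin s × Fin r) S)) 0 :=
                aux_isWeightedHomogeneous_rename _ _
                  (aux_isWeightedHomogeneous_zero_wt _ (fun i => rfl) _)
              simpa using ((A.mul B).mul C).mul D
            · have A : IsWeightedHomogeneous (wtSR r s)
                  (rename (embRR r s) (p₁ : MvPolynomial (Fin r × Fin r) S)) 0 :=
                aux_isWeightedHomogeneous_rename _ _
                  (aux_isWeightedHomogeneous_zero_wt _ (fun i => rfl) _)
              have B : IsWeightedHomogeneous (wtSR r s)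
                  (rename (embSS r s) (p₂ : MvPolynomial (Fin s × Fin s) S)) 0 :=
                aux_isWeightedHomogeneous_rename _ _
                  (aux_isWeightedHomogeneous_zero_wt _ (fun i => rfl) _)
              have C : IsWeightedHomogeneous (wtSR r s)
                  (rename (embRS r s) (p₃ : MvPolynomial (Fin r × Fin s) S)) 0 :=
                aux_isWeightedHomogeneous_rename _ _
                  (aux_isWeightedHomogeneous_zero_wt _ (fun i => rfl) _)
              have D : IsWeightedHomogeneous (wtSR r s)
                  (rename (embSR r s) (p₄ : MvPolynomial (Fin s × Fin r) S)) d₄ :=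
                aux_isWeightedHomogeneous_rename _ _
                  (aux_isWeightedHomogeneous_of_isHomogeneous _ (fun i => rfl) h₄)
              simpa using ((A.mul B).mul C).mul D
    · intro p hp
      simp only [blockSubmodule, Submodule.mem_inf, mem_weightedHomogeneousSubmodule] at hp
      obtain ⟨⟨⟨h1, h2⟩, h3⟩, h4⟩ := hp
      rw [← support_sum_monomial_coeff p]
      apply Submodule.sum_mem
      intro m hm
      have hc : coeff m p ≠ 0 := mem_support_iff.mp hm
      have w1 : (Finsupp.weight (wtRR r s)) m = d₁ := h1 hc
      have w2 : (Finsupp.weight (wtSS r s)) m = d₂ := h2 hc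
      have w3 : (Finsupp.weight (wtRS r s)) m = d₃ := h3 hc
      have w4 : (Finsupp.weight (wtSR r s)) m = d₄ := h4 hc
      have e1 : (resRR r s m).degree = d₁ := by
        rw [Finsupp.degree_eq_weight_one]; exact (weight_resRR r s m).trans w1
      have e2 : (resSS r s m).degree = d₂ := by
        rw [Finsupp.degree_eq_weight_one]; exact (weight_resSS r s m).trans w2
      have e3 : (resRS r s m).degree = d₃ := by
        rw [Finsupp.degree_eq_weight_one]; exact (weight_resRS r s m).trans w3
      have e4 : (resSR r s m).degree = d₄ := by
        rw [Finsupp.degree_eq_weight_one]; exact (weight_resSR r s m).trans w4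
      refine ⟨(((⟨monomial (resRR r s m) (coeff m p),
          (mem_homogeneousSubmodule _ _).mpr (isHomogeneous_monomial _ e1)⟩ :
            homogeneousSubmodule (Fin r × Fin r) S d₁) ⊗ₜ[S]
        (⟨monomial (resSS r s m) 1,
          (mem_homogeneousSubmodule _ _).mpr (isHomogeneous_monomial _ e2)⟩ :
            homogeneousSubmodule (Fin s × Fin s) S d₂)) ⊗ₜ[S]
        (⟨monomial (resRS r s m) 1,
          (mem_homogeneousSubmodule _ _).mpr (isHomogeneous_monomial _ e3)⟩ :
            homogeneousSubmodule (Fin r × Fin s) S d₃)) ⊗ₜ[S]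
        (⟨monomial (resSR r s m) 1,
          (mem_homogeneousSubmodule _ _).mpr (isHomogeneous_monomial _ e4)⟩ :
            homogeneousSubmodule (Fin s × Fin r) S d₄), ?_⟩
      rw [tmul_eq]
      simp only [rename_monomial, monomial_mul, mul_one]
      rw [res_decomp r s m]

end
end

section
/- Let S be a commutative ring, let q, s, j be natural numbers with j ≤ q and j ≤ s, let L be a q×q matrix over S that is lower triangular (L i k = 0 whenever i < k), let U be an s×s matrix over S that is upper triangular (U i k = 0 whenever i > k), and let z be a q×s matrix over S. Then det_j(L · z · U) = det_j(L) · det_j(z) · det_j(U). -/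
open Matrix

/-- `det_j(a)`: the determinant of the upper-left `j×j` submatrix of an `l×m` matrix `a`. -/
def detUL {S : Type*} [CommRing S] {l m : ℕ} (j : ℕ) (h₁ : j ≤ l) (h₂ : j ≤ m)
    (a : Matrix (Fin l) (Fin m) S) : S :=
  (a.submatrix (Fin.castLE h₁) (Fin.castLE h₂)).det

lemma sum_fin_castLE {S : Type*} [AddCommMonoid S] {n j : ℕ} (h : j ≤ n) (f : Fin n → S)
    (hf : ∀ a : Fin n, j ≤ a.val → f a = 0) :
    ∑ a, f a = ∑ a : Fin j, f (Fin.castLE h a) := by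
  have : ∑ a : Fin j, f (Fin.castLE h a) = ∑ a ∈ Finset.univ.map (Fin.castLEEmb h), f a := by
    rw [Finset.sum_map]; rfl
  rw [this]
  refine (Finset.sum_subset (Finset.subset_univ _) ?_).symm
  intro x _ hx
  apply hf
  by_contra hlt
  push_neg at hlt
  exact hx (Finset.mem_map.2 ⟨⟨x, hlt⟩, Finset.mem_univ _, rfl⟩)

/-- If `L` is lower triangular, `U` is upper triangular and `z` is any `q×s` matrix, then
`det_j(L·z·U) = det_j(L) · det_j(z) · det_j(U)`. -/
theorem detUL_triangular_mul
    (S : Type*) [CommRing S] (q s j : ℕ) (hq : j ≤ q) (hs : j ≤ s)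
    (L : Matrix (Fin q) (Fin q) S) (hL : ∀ i k : Fin q, i < k → L i k = 0)
    (U : Matrix (Fin s) (Fin s) S) (hU : ∀ i k : Fin s, k < i → U i k = 0)
    (z : Matrix (Fin q) (Fin s) S) :
    detUL j hq hs (L * z * U) = detUL j hq hq L * detUL j hq hs z * detUL j hs hs U := by
  have key : (L * z * U).submatrix (Fin.castLE hq) (Fin.castLE hs) =
      (L.submatrix (Fin.castLE hq) (Fin.castLE hq)) *
      (z.submatrix (Fin.castLE hq) (Fin.castLE hs)) *
      (U.submatrix (Fin.castLE hs) (Fin.castLE hs)) := by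
    ext i k
    simp only [submatrix_apply, mul_apply]
    rw [sum_fin_castLE hs (fun b => (∑ a, L (Fin.castLE hq i) a * z a b) * U b (Fin.castLE hs k))]
    · refine Finset.sum_congr rfl fun b _ => ?_
      congr 1
      rw [sum_fin_castLE hq (fun a => L (Fin.castLE hq i) a * z a (Fin.castLE hs b))]
      intro a ha
      have : (Fin.castLE hq i : Fin q) < a := by
        simp [Fin.lt_def]; omega
      rw [hL _ _ this, zero_mul]
    · intro b hb
      have : (Fin.castLE hs k : Fin s) < b := by
        simp [Fin.lt_def]; omega
      rw [hU _ _ this, mul_zero]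
  unfold detUL
  rw [key, det_mul, det_mul]
end

section
/- Let q, s be positive natural numbers, let μ = min(q, s), let r₁ ≥ r₂ ≥ ⋯ ≥ r_μ ≥ 0 be natural numbers, and set e_j = r_j − r_{j+1} for 1 ≤ j ≤ μ − 1 and e_μ = r_μ. Define P : Matrix (Fin q) (Fin s) ℂ → ℂ by P(z) = ∏_{j=1}^{μ} det_j(z)^{e_j}. Then for every upper triangular q×q complex matrix α (α i k = 0 whenever i > k), every upper triangular s×s complex matrix β, and every q×s complex matrix z: P(αᵀ · z · β) = (∏_{j=1}^{μ} det_j(α)^{e_j}) · (∏_{j=1}^{μ} det_j(β)^{e_j}) · P(z). -/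
open Matrix

/-- The exponents `e_j = r_j - r_{j+1}` (and `e_μ = r_μ`) attached to a decreasing tuple
`r₁ ≥ ⋯ ≥ r_μ ≥ 0`. -/
def wtExps {μ : ℕ} (r : Fin μ → ℕ) : Fin μ → ℕ := fun j =>
  if h : (j : ℕ) + 1 < μ then r j - r ⟨(j : ℕ) + 1, h⟩ else r j

/-- The highest weight vector `P(z) = ∏_{j=1}^{μ} det_j(z)^{e_j}` on `q×s` complex matrices. -/
noncomputable def hwVector (q s : ℕ) (r : Fin (min q s) → ℕ)
    (z : Matrix (Fin q) (Fin s) ℂ) : ℂ :=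
  ∏ j : Fin (min q s),
    (detUL ((j : ℕ) + 1) ((Nat.succ_le_of_lt j.isLt).trans (Nat.min_le_left q s))
      ((Nat.succ_le_of_lt j.isLt).trans (Nat.min_le_right q s)) z) ^ (wtExps r j)

lemma sum_castLE_of_vanish {M : Type*} [AddCommMonoid M] {q j : ℕ} (h : j ≤ q) (f : Fin q → M)
    (hf : ∀ a : Fin q, ¬ (a : ℕ) < j → f a = 0) :
    ∑ a : Fin q, f a = ∑ a : Fin j, f (Fin.castLE h a) := by
  symm
  calc ∑ a : Fin j, f (Fin.castLE h a)
      = ∑ a ∈ Finset.univ.map (Fin.castLEEmb h), f a := by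
        rw [Finset.sum_map]; rfl
    _ = ∑ a : Fin q, f a := ?_
  apply Finset.sum_subset (Finset.subset_univ _)
  intro x _ hx
  apply hf
  intro hlt
  exact hx (by
    simp only [Finset.mem_map, Finset.mem_univ, true_and]
    exact ⟨⟨(x : ℕ), hlt⟩, by ext; simp⟩)

lemma block_eq {q s j : ℕ} (h₁ : j ≤ q) (h₂ : j ≤ s)
    (α : Matrix (Fin q) (Fin q) ℂ) (hα : ∀ i k : Fin q, k < i → α i k = 0)
    (β : Matrix (Fin s) (Fin s) ℂ) (hβ : ∀ i k : Fin s, k < i → β i k = 0)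
    (z : Matrix (Fin q) (Fin s) ℂ) :
    (αᵀ * z * β).submatrix (Fin.castLE h₁) (Fin.castLE h₂) =
      (α.submatrix (Fin.castLE h₁) (Fin.castLE h₁))ᵀ *
        z.submatrix (Fin.castLE h₁) (Fin.castLE h₂) *
        β.submatrix (Fin.castLE h₂) (Fin.castLE h₂) := by
  ext i k
  simp only [Matrix.submatrix_apply, Matrix.mul_apply, Matrix.transpose_apply]
  rw [sum_castLE_of_vanish h₂ (fun b => (∑ a, α a (Fin.castLE h₁ i) * z a b) * β b (Fin.castLE h₂ k))]
  · apply Finset.sum_congr rfl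
    intro b _
    congr 1
    rw [sum_castLE_of_vanish h₁ (fun a => α a (Fin.castLE h₁ i) * z a (Fin.castLE h₂ b))]
    intro a ha
    have : (Fin.castLE h₁ i) < a := by
      rw [Fin.lt_def]; simp only [Fin.coe_castLE]; omega
    rw [hα a _ this, zero_mul]
  · intro b hb
    have : (Fin.castLE h₂ k) < b := by
      rw [Fin.lt_def]; simp only [Fin.coe_castLE]; omega
    rw [hβ b _ this, mul_zero]

lemma detUL_mul {q s j : ℕ} (h₁ : j ≤ q) (h₂ : j ≤ s)
    (α : Matrix (Fin q) (Fin q) ℂ) (hα : ∀ i k : Fin q, k < i → α i k = 0)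
    (β : Matrix (Fin s) (Fin s) ℂ) (hβ : ∀ i k : Fin s, k < i → β i k = 0)
    (z : Matrix (Fin q) (Fin s) ℂ) :
    detUL j h₁ h₂ (αᵀ * z * β) = detUL j h₁ h₁ α * detUL j h₂ h₂ β * detUL j h₁ h₂ z := by
  unfold detUL
  rw [block_eq h₁ h₂ α hα β hβ z, Matrix.det_mul, Matrix.det_mul, Matrix.det_transpose]
  ring

/-- The eigenvector property of the highest weight vector `𝒫(z) = ∏ det_j(z)^{e_j}`:
for upper triangular `α` and `β`,
`P(αᵀ z β) = (∏ det_j(α)^{e_j}) (∏ det_j(β)^{e_j}) P(z)`. -/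
theorem hwVector_eigenvector (q s : ℕ) (hq : 0 < q) (hs : 0 < s)
    (r : Fin (min q s) → ℕ) (hr : Antitone r)
    (α : Matrix (Fin q) (Fin q) ℂ) (hα : ∀ i k : Fin q, k < i → α i k = 0)
    (β : Matrix (Fin s) (Fin s) ℂ) (hβ : ∀ i k : Fin s, k < i → β i k = 0)
    (z : Matrix (Fin q) (Fin s) ℂ) :
    hwVector q s r (αᵀ * z * β) =
      (∏ j : Fin (min q s),
        (detUL ((j : ℕ) + 1) ((Nat.succ_le_of_lt j.isLt).trans (Nat.min_le_left q s))
          ((Nat.succ_le_of_lt j.isLt).trans (Nat.min_le_left q s)) α) ^ (wtExps r j)) *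
      (∏ j : Fin (min q s),
        (detUL ((j : ℕ) + 1) ((Nat.succ_le_of_lt j.isLt).trans (Nat.min_le_right q s))
          ((Nat.succ_le_of_lt j.isLt).trans (Nat.min_le_right q s)) β) ^ (wtExps r j)) *
      hwVector q s r z := by
  unfold hwVector
  rw [← Finset.prod_mul_distrib, ← Finset.prod_mul_distrib]
  apply Finset.prod_congr rfl
  intro j _
  rw [detUL_mul _ _ α hα β hβ z, mul_pow, mul_pow]
end
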